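/- Let z, ẑ ∈ ℂ with z ≠ 0 and |ẑ − z| ≤ |z|/2, and suppose the closed segment {z + s(ẑ − z) : s ∈ [0,1]} is disjoint from the nonpositive real axis (−∞, 0] ⊂ ℂ. Then ẑ ≠ 0 and |Log ẑ − Log z| ≤ (2/|z|)·|ẑ − z|, where Log denotes the principal branch of the complex logarithm. -/

import Mathlib

/-- Local Lipschitz control for the principal branch of the complex logarithm
along a segment avoiding the nonpositive real axis. -/
theorem log_local_lipschitz
    (z zhat : ℂ) (hz : z ≠ 0)
    (hclose : ‖zhat - z‖ ≤ ‖z‖ / 2)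
    (hseg : ∀ s : ℝ, s ∈ Set.Icc (0 : ℝ) 1 →
      ¬((z + (s : ℂ) * (zhat - z)).im = 0 ∧ (z + (s : ℂ) * (zhat - z)).re ≤ 0)) :
    zhat ≠ 0 ∧
    ‖Complex.log zhat - Complex.log z‖
      ≤ (2 / ‖z‖) * ‖zhat - z‖ := by
  have hzpos : 0 < ‖z‖ := norm_pos_iff.mpr hz
  -- every point of segment has modulus ≥ |z|/2 and lies in slit plane
  have hmem : ∀ w ∈ segment ℝ z zhat, ‖z‖ / 2 ≤ ‖w‖ ∧ w ∈ Complex.slitPlane := by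
    intro w hw
    rw [segment_eq_image'] at hw
    obtain ⟨t, ht, rfl⟩ := hw
    have h1 : ‖(t : ℂ) * (zhat - z)‖ ≤ ‖z‖ / 2 := by
      rw [norm_mul, Complex.norm_real, Real.norm_eq_abs]
      calc |t| * ‖zhat - z‖ ≤ 1 * (‖z‖ / 2) := by
            apply mul_le_mul _ hclose (norm_nonneg _) zero_le_one
            rw [abs_of_nonneg ht.1]; exact ht.2
        _ = ‖z‖ / 2 := one_mul _
    constructor
    · have h2 : ‖z‖ ≤ ‖z + (t:ℂ) * (zhat - z)‖ + ‖(t:ℂ) * (zhat - z)‖ := by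
        simpa using norm_add_le (z + (t:ℂ) * (zhat - z)) (-((t:ℂ) * (zhat - z)))
      simp only [Complex.real_smul]
      linarith
    · have := hseg t ht
      simp only [Complex.real_smul]
      rw [Complex.mem_slitPlane_iff]
      by_contra hcon
      push_neg at hcon
      exact this ⟨hcon.2, hcon.1⟩
  have hzhat : zhat ≠ 0 := by
    have := (hmem zhat (right_mem_segment ℝ z zhat)).1
    intro h; rw [h] at this; simp at this; linarith
  refine ⟨hzhat, ?_⟩
  have hconv : Convex ℝ (segment ℝ z zhat) := convex_segment z zhat
  have key : ∀ w ∈ segment ℝ z zhat,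
      HasFDerivWithinAt Complex.log
        ((ContinuousLinearMap.id ℂ ℂ).smulRight w⁻¹ |>.restrictScalars ℝ)
        (segment ℝ z zhat) w := by
    intro w hw
    exact ((Complex.hasDerivAt_log (hmem w hw).2).hasFDerivAt.restrictScalars ℝ).hasFDerivWithinAt
  have hbound : ∀ w ∈ segment ℝ z zhat,
      ‖(ContinuousLinearMap.id ℂ ℂ).smulRight w⁻¹ |>.restrictScalars ℝ‖ ≤ 2 / ‖z‖ := by
    intro w hw
    have h1 : ‖((ContinuousLinearMap.id ℂ ℂ).smulRight w⁻¹ |>.restrictScalars ℝ)‖ ≤ ‖w⁻¹‖ := by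
      refine ContinuousLinearMap.opNorm_le_bound _ (norm_nonneg _) fun x => ?_
      simp [ContinuousLinearMap.smulRight_apply, norm_mul, mul_comm]
    refine h1.trans ?_
    have h2 := (hmem w hw).1
    rw [norm_inv]
    calc (‖w‖)⁻¹ ≤ (‖z‖ / 2)⁻¹ :=
          inv_anti₀ (by positivity) h2
      _ = 2 / ‖z‖ := by rw [inv_div]
  have := hconv.norm_image_sub_le_of_norm_hasFDerivWithin_le key hbound
    (left_mem_segment ℝ z zhat) (right_mem_segment ℝ z zhat)
  simpa [Complex.dist_eq] using this
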